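/- Fix δ ∈ (0, 1/2) and constants 0 < c₀ ≤ c₁ < ∞, c₂ > 0, C₃ > 0. There exists a constant k > 0, depending only on δ, c₂ and C₃, such that the following holds for every M ≥ 1. Let J be an interval, h : J → ℝ continuously differentiable with c₀ ≤ h ≤ c₁ on J, and X : [δ, 1−δ] → J continuously differentiable with X′(t) = h(X(t)) for all t. Let b : J → ℝ be continuously differentiable with ∫_{X(δ)}^{X(1−δ)} b(v)²/h(v)³ dv ≥ c₂ and ∫_δ^{1−δ} ( b′(X(t)) − b(X(t)) h′(X(t))/h(X(t)) )² dt ≤ C₃ M². Then, with R(t) := ∫_δ^t b(X(u))/h(X(u)) du, one has ∫_δ^{1−δ} (R(t))² dt ≥ k M⁻². -/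

import Mathlib

open MeasureTheory Set intervalIntegral

lemma myCS (x y : ℝ) (hxy : x ≤ y) (u v : ℝ → ℝ)
    (hu : ContinuousOn u (Icc x y)) (hv : ContinuousOn v (Icc x y)) :
    (∫ t in x..y, u t * v t) ^ 2 ≤ (∫ t in x..y, (u t)^2) * (∫ t in x..y, (v t)^2) := by
  have huv : Set.uIcc x y = Icc x y := uIcc_of_le hxy
  have hu2 : IntervalIntegrable (fun t => (u t)^2) volume x y :=
    ContinuousOn.intervalIntegrable (by rw [huv]; exact hu.pow 2)
  have hv2 : IntervalIntegrable (fun t => (v t)^2) volume x y :=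
    ContinuousOn.intervalIntegrable (by rw [huv]; exact hv.pow 2)
  have huvI : IntervalIntegrable (fun t => u t * v t) volume x y :=
    ContinuousOn.intervalIntegrable (by rw [huv]; exact hu.mul hv)
  set P := ∫ t in x..y, (u t)^2 with hP
  set Q := ∫ t in x..y, u t * v t with hQ
  set S := ∫ t in x..y, (v t)^2 with hS
  have key : ∀ l : ℝ, 0 ≤ P - 2*l*Q + l^2*S := by
    intro l
    have e1 : (∫ t in x..y, ((u t - l * v t)^2)) = P - 2*l*Q + l^2*S := by
      have : (fun t => (u t - l * v t)^2)
          = fun t => ((u t)^2 - (2*l) * (u t * v t)) + l^2 * (v t)^2 := by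
        funext t; ring
      rw [this, integral_add (hu2.sub (huvI.const_mul (2*l))) (hv2.const_mul (l^2)),
        integral_sub hu2 (huvI.const_mul (2*l)), intervalIntegral.integral_const_mul, intervalIntegral.integral_const_mul]
      try ring
    have e2 : 0 ≤ ∫ t in x..y, ((u t - l * v t)^2) :=
      integral_nonneg hxy (fun t _ => sq_nonneg _)
    linarith
  have hSnn : 0 ≤ S := integral_nonneg hxy (fun t _ => sq_nonneg _)
  have hPnn : 0 ≤ P := integral_nonneg hxy (fun t _ => sq_nonneg _)
  rcases eq_or_lt_of_le hSnn with hS0 | hSpos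
  · -- S = 0, show Q = 0
    have hQ0 : Q = 0 := by
      by_contra hQ
      have h1 := key ((P+1)/(2*Q))
      rw [← hS0] at h1
      have : 2*((P+1)/(2*Q))*Q = P + 1 := by field_simp
      nlinarith
    rw [hQ0, ← hS0]; norm_num
  · have h2 : 0 ≤ (P - 2*(Q/S)*Q + (Q/S)^2*S) * S := mul_nonneg (key _) hSnn
    have h3 : (P - 2*(Q/S)*Q + (Q/S)^2*S) * S = P*S - Q^2 := by field_simp; ring
    linarith

lemma int_psi (x y : ℝ) : (∫ t in x..y, (t - x) * (y - t)) = (y - x)^3 / 6 := by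
  have hd : ∀ t : ℝ, HasDerivAt (fun t : ℝ => -(t^3)/3 + (x+y)*t^2/2 - x*y*t)
      ((t - x) * (y - t)) t := by
    intro t
    have h1 := (((hasDerivAt_pow 3 t).neg.div_const 3).add
        (((hasDerivAt_pow 2 t).const_mul (x+y)).div_const 2)).sub
        ((hasDerivAt_id t).const_mul (x*y))
    exact h1.congr_deriv (by push_cast; ring)
  rw [integral_eq_sub_of_hasDerivAt (fun t _ => hd t)
    (Continuous.intervalIntegrable (by continuity) x y)]
  ring

lemma int_psi' (x y : ℝ) : (∫ t in x..y, (x + y - 2*t)^2) = (y - x)^3 / 3 := by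
  have hd : ∀ t : ℝ, HasDerivAt (fun t : ℝ => -(x+y-2*t)^3/6) ((x + y - 2*t)^2) t := by
    intro t
    have h0 : HasDerivAt (fun t : ℝ => x+y-2*t) (-2) t := by
      simpa using ((hasDerivAt_id t).const_mul (2:ℝ)).const_sub (x+y)
    have h1 := ((h0.pow 3).neg.div_const 6)
    exact h1.congr_deriv (by push_cast; ring)
  rw [integral_eq_sub_of_hasDerivAt (fun t _ => hd t)
    (Continuous.intervalIntegrable (by continuity) x y)]
  ring

lemma subinterval (a b : ℝ) (f g w : ℝ → ℝ)
    (hfd : ∀ t, HasDerivAt f (g t) t)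
    (hgc : Continuous g)
    (hgd : ∀ t ∈ Icc a b, HasDerivWithinAt g (w t) (Icc a b) t)
    (hwc : ContinuousOn w (Icc a b))
    (x y : ℝ) (hax : a ≤ x) (hxy : x < y) (hyb : y ≤ b) :
    (∫ t in x..y, (g t)^2) ≤
      24/(y-x)^2 * (∫ t in x..y, (f t)^2) + 2*(y-x)^2 * (∫ t in x..y, (w t)^2) := by
  set l := y - x with hl
  have hlpos : 0 < l := by simp [hl]; linarith
  have hxy' : x ≤ y := hxy.le
  have huv : Set.uIcc x y = Icc x y := uIcc_of_le hxy'
  have hIccsub : Icc x y ⊆ Icc a b := Icc_subset_Icc hax hyb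
  have hl3 : (0:ℝ) < l^3 := by positivity
  -- the weight
  set ψ : ℝ → ℝ := fun t => 6/l^3 * ((t - x) * (y - t)) with hψ
  set ψd : ℝ → ℝ := fun t => 6/l^3 * (x + y - 2*t) with hψd
  have hψder : ∀ t : ℝ, HasDerivAt ψ (ψd t) t := by
    intro t
    have h1 := (((hasDerivAt_id t).sub_const x).mul ((hasDerivAt_id t).const_sub y)).const_mul (6/l^3)
    exact h1.congr_deriv (by simp only [hψd, id_eq]; ring)
  have hψcont : Continuous ψ := by fun_prop
  have hψdcont : Continuous ψd := by fun_prop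
  have hψnn : ∀ t ∈ Icc x y, 0 ≤ ψ t := by
    intro t ht
    have : 0 ≤ (t - x) * (y - t) := mul_nonneg (by linarith [ht.1]) (by linarith [ht.2])
    positivity
  have hψint : (∫ t in x..y, ψ t) = 1 := by
    rw [hψ, intervalIntegral.integral_const_mul, int_psi]
    field_simp
    rw [hl]
  have hψdint : (∫ t in x..y, (ψd t)^2) = 12 / l^3 := by
    have : (fun t => (ψd t)^2) = fun t => (6/l^3)^2 * ((x + y - 2*t)^2) := by
      funext t; simp [hψd]; ring
    rw [this, intervalIntegral.integral_const_mul, int_psi']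
    field_simp; ring
  -- continuity of f
  have hfc : Continuous f := continuous_iff_continuousAt.2 fun t => (hfd t).continuousAt
  -- integration by parts: A = ∫ g ψ = -∫ f ψd
  set A : ℝ := ∫ t in x..y, g t * ψ t with hA
  have hgψ : IntervalIntegrable (fun t => g t * ψ t) volume x y :=
    (hgc.mul hψcont).intervalIntegrable x y
  have hfψd : IntervalIntegrable (fun t => f t * ψd t) volume x y :=
    (hfc.mul hψdcont).intervalIntegrable x y
  have hIBP : A = - ∫ t in x..y, f t * ψd t := by
    have hprod : ∀ t ∈ Set.uIcc x y, HasDerivAt (fun t => f t * ψ t) (g t * ψ t + f t * ψd t) t :=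
      fun t _ => (hfd t).mul (hψder t)
    have h2 := integral_eq_sub_of_hasDerivAt hprod (hgψ.add hfψd)
    rw [integral_add hgψ hfψd] at h2
    have hψx : ψ x = 0 := by simp [hψ]
    have hψy : ψ y = 0 := by simp [hψ]
    rw [hψx, hψy] at h2
    have h3 : A + (∫ t in x..y, f t * ψd t) = 0 := by rw [hA, h2]; ring
    linarith
  -- bound A² via Cauchy-Schwarz
  have hA2 : A^2 ≤ 12/l^3 * ∫ t in x..y, (f t)^2 := by
    have := myCS x y hxy' f ψd hfc.continuousOn hψdcont.continuousOn
    rw [hψdint] at this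
    calc A^2 = (∫ t in x..y, f t * ψd t)^2 := by rw [hIBP]; ring
    _ ≤ (∫ t in x..y, (f t)^2) * (12/l^3) := this
    _ = 12/l^3 * ∫ t in x..y, (f t)^2 := by ring
  -- D := ∫ |w|
  set D : ℝ := ∫ t in x..y, |w t| with hD
  have hwcxy : ContinuousOn w (Icc x y) := hwc.mono hIccsub
  have hDnn : 0 ≤ D := integral_nonneg hxy' (fun t _ => abs_nonneg _)
  have hD2 : D^2 ≤ l * ∫ t in x..y, (w t)^2 := by
    have h1 := myCS x y hxy' (fun t => |w t|) (fun t => (1:ℝ))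
      hwcxy.abs continuousOn_const
    simp only [mul_one, one_pow, sq_abs] at h1
    rw [intervalIntegral.integral_const] at h1
    calc D^2 ≤ (∫ t in x..y, (w t)^2) * ((y - x) • (1:ℝ)) := h1
    _ = l * ∫ t in x..y, (w t)^2 := by rw [smul_eq_mul]; ring
  -- oscillation bound for g
  have hwint : IntervalIntegrable w volume x y :=
    ContinuousOn.intervalIntegrable (by rw [huv]; exact hwcxy)
  have hosc : ∀ s ∈ Icc x y, ∀ t ∈ Icc x y, |g t - g s| ≤ D := by
    have key : ∀ s ∈ Icc x y, ∀ t ∈ Icc x y, s ≤ t → |g t - g s| ≤ D := by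
      intro s hs t ht hst
      have hftc : (∫ u in s..t, w u) = g t - g s := by
        apply integral_eq_sub_of_hasDeriv_right_of_le hst
          (hgc.continuousOn) ?_ (hwint.mono_set ?_)
        · intro u hu
          have huab : Icc a b ∈ nhds u :=
            Icc_mem_nhds (by linarith [hs.1, hu.1]) (by linarith [ht.2, hu.2])
          exact (((hgd u (hIccsub ⟨by linarith [hs.1, hu.1.le], by linarith [ht.2, hu.2.le]⟩)).hasDerivAt huab)).hasDerivWithinAt
        · rw [Set.uIcc_of_le hst, huv]; exact Icc_subset_Icc hs.1 ht.2
      rw [← hftc]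
      calc |∫ u in s..t, w u| ≤ ∫ u in s..t, |w u| := abs_integral_le_integral_abs hst
      _ ≤ D := integral_mono_interval hs.1 hst ht.2
          (Filter.Eventually.of_forall fun u => abs_nonneg _) hwint.abs
    intro s hs t ht
    rcases le_total s t with hst | hts
    · exact key s hs t ht hst
    · rw [abs_sub_comm]; exact key t ht s hs hts
  -- pointwise bound |g t - A| ≤ D
  have hψI : IntervalIntegrable ψ volume x y := hψcont.intervalIntegrable x y
  have hgA : ∀ t ∈ Icc x y, |g t - A| ≤ D := by
    intro t ht
    have e : (∫ s in x..y, (g t - g s) * ψ s) = g t - A := by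
      have e0 : (fun s => (g t - g s) * ψ s) = fun s => g t * ψ s - g s * ψ s := by
        funext s; ring
      rw [e0, integral_sub (hψI.const_mul (g t)) hgψ, intervalIntegral.integral_const_mul, hψint, hA]
      ring
    rw [← e]
    calc |∫ s in x..y, (g t - g s) * ψ s| ≤ ∫ s in x..y, |(g t - g s) * ψ s| :=
        abs_integral_le_integral_abs hxy'
    _ ≤ ∫ s in x..y, D * ψ s := by
        apply integral_mono_on hxy'
          (((continuous_const.sub hgc).mul hψcont).abs.intervalIntegrable x y)
          (hψI.const_mul D)
        intro s hs
        show |(g t - g s) * ψ s| ≤ D * ψ s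
        rw [abs_mul, abs_of_nonneg (hψnn s hs)]
        exact mul_le_mul_of_nonneg_right (hosc s hs t ht) (hψnn s hs)
    _ = D := by rw [intervalIntegral.integral_const_mul, hψint]; ring
  -- pointwise square bound and integral bound
  have hptsq : ∀ t ∈ Icc x y, (g t)^2 ≤ 2*A^2 + 2*D^2 := by
    intro t ht
    have h1 := hgA t ht
    have h2 : (g t - A)^2 ≤ D^2 := by
      have := sq_abs (g t - A)
      nlinarith [abs_nonneg (g t - A)]
    nlinarith [sq_nonneg (A - (g t - A))]
  have h5 : (∫ t in x..y, (g t)^2) ≤ l * (2*A^2 + 2*D^2) := by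
    have := integral_mono_on hxy'
      ((hgc.pow 2).intervalIntegrable x y) (intervalIntegrable_const (μ := volume)) hptsq
    rw [intervalIntegral.integral_const, smul_eq_mul, ← hl] at this
    exact this
  set F := ∫ t in x..y, (f t)^2 with hF
  set W := ∫ t in x..y, (w t)^2 with hW
  have h6 : 2*A^2 + 2*D^2 ≤ 2*(12/l^3*F) + 2*(l*W) := by
    have := hA2; have := hD2; nlinarith
  have h7 : l * (2*(12/l^3*F) + 2*(l*W)) = 24/l^2*F + 2*l^2*W := by
    field_simp; ring
  calc (∫ t in x..y, (g t)^2) ≤ l * (2*A^2 + 2*D^2) := h5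
  _ ≤ l * (2*(12/l^3*F) + 2*(l*W)) := mul_le_mul_of_nonneg_left h6 hlpos.le
  _ = 24/l^2*F + 2*l^2*W := h7

lemma global (a b : ℝ) (hab : a < b) (f g w : ℝ → ℝ)
    (hfd : ∀ t, HasDerivAt f (g t) t)
    (hgc : Continuous g)
    (hgd : ∀ t ∈ Icc a b, HasDerivWithinAt g (w t) (Icc a b) t)
    (hwc : ContinuousOn w (Icc a b))
    (n : ℕ) (hn : 0 < n) :
    (∫ t in a..b, (g t)^2) ≤
      24/((b-a)/n)^2 * (∫ t in a..b, (f t)^2)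
        + 2*((b-a)/n)^2 * (∫ t in a..b, (w t)^2) := by
  have hfc : Continuous f := continuous_iff_continuousAt.2 fun t => (hfd t).continuousAt
  set l : ℝ := (b - a)/n with hl
  have hnR : (0:ℝ) < n := by exact_mod_cast hn
  have hlpos : 0 < l := div_pos (by linarith) hnR
  set p : ℕ → ℝ := fun i => a + i * l with hp
  have hp0 : p 0 = a := by simp [hp]
  have hpn : p n = b := by
    simp only [hp, hl]; field_simp; ring
  have hstep : ∀ i : ℕ, p (i+1) - p i = l := by
    intro i; simp only [hp]; push_cast; ring
  have hplt : ∀ i : ℕ, p i < p (i+1) := by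
    intro i; have := hstep i; linarith
  have hmono : Monotone p := monotone_nat_of_le_succ fun i => (hplt i).le
  have hmem : ∀ i : ℕ, i ≤ n → p i ∈ Icc a b := by
    intro i hi
    constructor
    · rw [← hp0]; exact hmono (Nat.zero_le i)
    · rw [← hpn]; exact hmono hi
  -- integrability on pieces
  have hsub : ∀ i : ℕ, i < n → Set.uIcc (p i) (p (i+1)) ⊆ Icc a b := by
    intro i hi
    rw [Set.uIcc_of_le (hplt i).le]
    exact Icc_subset_Icc (hmem i hi.le).1 (hmem (i+1) hi).2
  have hwI : ∀ i < n, IntervalIntegrable (fun t => (w t)^2) volume (p i) (p (i+1)) :=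
    fun i hi => ContinuousOn.intervalIntegrable ((hwc.pow 2).mono (hsub i hi))
  have hgI : ∀ i < n, IntervalIntegrable (fun t => (g t)^2) volume (p i) (p (i+1)) :=
    fun i hi => ((hgc.pow 2).intervalIntegrable _ _)
  have hfI : ∀ i < n, IntervalIntegrable (fun t => (f t)^2) volume (p i) (p (i+1)) :=
    fun i hi => ((hfc.pow 2).intervalIntegrable _ _)
  have hgsum := sum_integral_adjacent_intervals hgI
  have hfsum := sum_integral_adjacent_intervals hfI
  have hwsum := sum_integral_adjacent_intervals hwI
  rw [hp0, hpn] at hgsum hfsum hwsum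
  rw [← hgsum, ← hfsum, ← hwsum]
  have hpiece : ∀ i ∈ Finset.range n,
      (∫ t in (p i)..(p (i+1)), (g t)^2) ≤
        24/l^2 * (∫ t in (p i)..(p (i+1)), (f t)^2)
          + 2*l^2 * (∫ t in (p i)..(p (i+1)), (w t)^2) := by
    intro i hi
    rw [Finset.mem_range] at hi
    have h := subinterval a b f g w hfd hgc hgd hwc (p i) (p (i+1))
      (hmem i hi.le).1 (hplt i) (hmem (i+1) hi).2
    rwa [hstep i] at h
  calc (∑ i ∈ Finset.range n, ∫ t in (p i)..(p (i+1)), (g t)^2)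
      ≤ ∑ i ∈ Finset.range n, (24/l^2 * (∫ t in (p i)..(p (i+1)), (f t)^2)
          + 2*l^2 * (∫ t in (p i)..(p (i+1)), (w t)^2)) := Finset.sum_le_sum hpiece
  _ = 24/l^2 * (∑ i ∈ Finset.range n, ∫ t in (p i)..(p (i+1)), (f t)^2)
      + 2*l^2 * (∑ i ∈ Finset.range n, ∫ t in (p i)..(p (i+1)), (w t)^2) := by
      rw [Finset.sum_add_distrib, ← Finset.mul_sum, ← Finset.mul_sum]

lemma arith (L c₂ C₃ M Q Wi : ℝ) (hL0 : 0 < L) (hc₂ : 0 < c₂) (hC₃ : 0 < C₃)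
    (hM : 1 ≤ M) (n : ℕ) {c : ℝ} (hcsq : c^2 = 4*L^2*C₃/c₂) (hc0 : 0 ≤ c)
    (hn1 : c*M ≤ (n:ℝ)) (hn2 : (n:ℝ) ≤ (c+2)*M)
    (hWile : Wi ≤ C₃*M^2) (hWnn : 0 ≤ Wi)
    (hglob : c₂ ≤ 24/(L/n)^2 * Q + 2*(L/n)^2 * Wi) :
    c₂*L^2/(48*(c+2)^2) / M^2 ≤ Q := by
  have hM0 : (0:ℝ) < M := lt_of_lt_of_le one_pos hM
  have hc2pos : 0 < c^2 := by rw [hcsq]; positivity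
  have hcpos : 0 < c := by nlinarith
  have hnR : (0:ℝ) < n := lt_of_lt_of_le (by positivity) hn1
  have hl2pos : (0:ℝ) < (L/n)^2 := by positivity
  have key1 : 2*(L/(n:ℝ))^2*(C₃*M^2) ≤ c₂/2 := by
    have e1 : c₂ * c^2 = 4*L^2*C₃ := by rw [hcsq]; field_simp
    have e2 : c^2*M^2 ≤ (n:ℝ)^2 := by
      have h9 := mul_self_le_mul_self (by positivity : (0:ℝ) ≤ c*M) hn1
      nlinarith
    have e3 : 4*L^2*C₃*M^2 ≤ c₂*(n:ℝ)^2 := by nlinarith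
    have e4 : 2*(L/(n:ℝ))^2*(C₃*M^2) = (2*L^2*C₃*M^2)/(n:ℝ)^2 := by
      field_simp
    rw [e4, div_le_iff₀ (by positivity)]
    nlinarith
  have key2 : c₂/2 ≤ 24/(L/n)^2 * Q := by
    have h1 : 2*(L/(n:ℝ))^2 * Wi ≤ 2*(L/(n:ℝ))^2*(C₃*M^2) :=
      mul_le_mul_of_nonneg_left hWile (by positivity)
    linarith
  have key3 : c₂ * (L/n)^2 / 48 ≤ Q := by
    have h2 := mul_le_mul_of_nonneg_right key2 hl2pos.le
    have h3 : 24/(L/n)^2 * Q * (L/n)^2 = 24*Q := by field_simp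
    rw [h3] at h2
    nlinarith
  have key4 : c₂*L^2/(48*(c+2)^2) / M^2 ≤ c₂ * (L/n)^2 / 48 := by
    have hc2ne : c + 2 ≠ 0 := by positivity
    have hMne : M ≠ 0 := ne_of_gt hM0
    have e4 : c₂*L^2/(48*(c+2)^2) / M^2 = c₂ * (L/((c+2)*M))^2 / 48 := by
      rw [div_pow, mul_pow]
      field_simp
    rw [e4]
    have h5 : L/((c+2)*M) ≤ L/n := div_le_div_of_nonneg_left hL0.le hnR hn2
    have h6 : (0:ℝ) ≤ L/((c+2)*M) := by positivity
    have h7 : (L/((c+2)*M))^2 ≤ (L/(n:ℝ))^2 := pow_le_pow_left₀ h6 h5 2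
    have h8 := mul_le_mul_of_nonneg_left h7 hc₂.le
    linarith
  linarith

/-- Quantitative core of Proposition 3.1: with `R(t) = ∫_δ^t b(X(u))/h(X(u)) du`, a bound
`∫ (b'(X) - b(X)h'(X)/h(X))² ≤ C₃ M²` and a lower bound `∫ b²/h³ ≥ c₂` imply
`∫ R² ≥ k M⁻²`, with `k` depending only on `δ`, `c₂`, `C₃`. -/
theorem stmt_3
    (δ c₂ C₃ : ℝ) (hδ : δ ∈ Ioo (0:ℝ) (1/2)) (hc₂ : 0 < c₂) (hC₃ : 0 < C₃) :
    ∃ k : ℝ, 0 < k ∧ ∀ c₀ c₁ : ℝ, 0 < c₀ → c₀ ≤ c₁ →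
      ∀ M : ℝ, 1 ≤ M →
      ∀ J : Set ℝ, J.OrdConnected →
      ∀ h h' : ℝ → ℝ,
        (∀ x ∈ J, HasDerivWithinAt h (h' x) J x) → ContinuousOn h' J →
        (∀ x ∈ J, c₀ ≤ h x) → (∀ x ∈ J, h x ≤ c₁) →
      ∀ X : ℝ → ℝ,
        (∀ t ∈ Icc δ (1 - δ), X t ∈ J) →
        (∀ t ∈ Icc δ (1 - δ), HasDerivWithinAt X (h (X t)) (Icc δ (1 - δ)) t) →
      ∀ b b' : ℝ → ℝ,
        (∀ x ∈ J, HasDerivWithinAt b (b' x) J x) → ContinuousOn b' J →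
        c₂ ≤ (∫ v in (X δ)..(X (1 - δ)), (b v) ^ 2 / (h v) ^ 3) →
        (∫ t in δ..(1 - δ), (b' (X t) - b (X t) * h' (X t) / h (X t)) ^ 2) ≤ C₃ * M ^ 2 →
        k / M ^ 2 ≤ ∫ t in δ..(1 - δ), (∫ u in δ..t, b (X u) / h (X u)) ^ 2 := by
  obtain ⟨hδ0, hδhalf⟩ := hδ
  set L : ℝ := 1 - 2*δ with hL
  have hL0 : 0 < L := by rw [hL]; linarith
  set c : ℝ := Real.sqrt (4*L^2*C₃/c₂) with hcdef
  have hc0 : 0 ≤ c := Real.sqrt_nonneg _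
  have hcsq : c^2 = 4*L^2*C₃/c₂ := Real.sq_sqrt (by positivity)
  refine ⟨c₂*L^2/(48*(c+2)^2), by positivity, ?_⟩
  intro c₀ c₁ hc₀ hc₀₁ M hM J hJ h h' hh hh'c hhlb hhub X hXJ hXd b b' hb hb'c hcv hw2
  have hab : δ < 1 - δ := by linarith
  have hδle : δ ≤ 1 - δ := hab.le
  have huIJ : Set.uIcc δ (1-δ) = Icc δ (1-δ) := uIcc_of_le hδle
  -- basic continuity
  have hhc : ContinuousOn h J := fun x hx => (hh x hx).continuousWithinAt
  have hbc : ContinuousOn b J := fun x hx => (hb x hx).continuousWithinAt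
  have hXc : ContinuousOn X (Icc δ (1-δ)) := fun t ht => (hXd t ht).continuousWithinAt
  have hXmapsTo : MapsTo X (Icc δ (1-δ)) J := fun t ht => hXJ t ht
  have hneJ : ∀ v ∈ J, h v ≠ 0 := fun v hv => ne_of_gt (lt_of_lt_of_le hc₀ (hhlb v hv))
  -- the clamp
  set cl : ℝ → ℝ := fun t => max δ (min t (1-δ)) with hcl
  have hclcont : Continuous cl := continuous_const.max (continuous_id.min continuous_const)
  have hclmem : ∀ t, cl t ∈ Icc δ (1-δ) :=
    fun t => ⟨le_max_left _ _, max_le hδle (min_le_right _ _)⟩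
  have hclid : ∀ t ∈ Icc δ (1-δ), cl t = t := by
    intro t ht
    simp only [hcl]
    rw [min_eq_left ht.2, max_eq_right ht.1]
  -- the functions
  set g : ℝ → ℝ := fun t => b (X (cl t)) / h (X (cl t)) with hgdef
  set f : ℝ → ℝ := fun t => ∫ u in δ..t, g u with hfdef
  set w : ℝ → ℝ := fun t => b' (X t) - b (X t) * h' (X t) / h (X t) with hwdef
  have hXcc : Continuous (fun t => X (cl t)) := hXc.comp_continuous hclcont hclmem
  have hXcJ : ∀ t, X (cl t) ∈ J := fun t => hXJ _ (hclmem t)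
  have hgc : Continuous g := by
    apply Continuous.div (hbc.comp_continuous hXcc hXcJ) (hhc.comp_continuous hXcc hXcJ)
    exact fun t => hneJ _ (hXcJ t)
  have hfd : ∀ t, HasDerivAt f (g t) t := fun t =>
    intervalIntegral.integral_hasDerivAt_right (hgc.intervalIntegrable _ _)
      (hgc.stronglyMeasurableAtFilter _ _) hgc.continuousAt
  have hneX : ∀ t ∈ Icc δ (1-δ), h (X t) ≠ 0 := fun t ht => hneJ _ (hXJ t ht)
  have hwc : ContinuousOn w (Icc δ (1-δ)) := by
    apply ContinuousOn.sub (hb'c.comp hXc hXmapsTo)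
    exact ((hbc.comp hXc hXmapsTo).mul (hh'c.comp hXc hXmapsTo)).div
      (hhc.comp hXc hXmapsTo) hneX
  have hgd : ∀ t ∈ Icc δ (1-δ), HasDerivWithinAt g (w t) (Icc δ (1-δ)) t := by
    intro t ht
    have hbX : HasDerivWithinAt (fun u => b (X u)) (b' (X t) * h (X t)) (Icc δ (1-δ)) t :=
      (hb (X t) (hXJ t ht)).comp t (hXd t ht) hXmapsTo
    have hhX : HasDerivWithinAt (fun u => h (X u)) (h' (X t) * h (X t)) (Icc δ (1-δ)) t :=
      (hh (X t) (hXJ t ht)).comp t (hXd t ht) hXmapsTo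
    have hdiv := hbX.div hhX (hneX t ht)
    have heq : (b' (X t) * h (X t) * h (X t) - b (X t) * (h' (X t) * h (X t))) / h (X t) ^ 2
        = w t := by
      have hne' := hneX t ht
      rw [hwdef]
      field_simp
    rw [heq] at hdiv
    exact hdiv.congr (fun u hu => by simp only [hgdef]; rw [hclid u hu]; rfl)
      (by simp only [hgdef]; rw [hclid t ht]; rfl)
  -- change of variables : c₂ ≤ ∫ g²
  have hg2 : c₂ ≤ ∫ t in δ..(1-δ), (g t)^2 := by
    have himg : X '' (Set.uIcc δ (1-δ)) ⊆ J := by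
      rw [huIJ]; rintro v ⟨t, ht, rfl⟩; exact hXJ t ht
    have hcv2 := integral_comp_smul_deriv'' (a := δ) (b := 1-δ) (f := X)
      (f' := fun t => h (X t)) (g := fun v => (b v)^2/(h v)^3)
      (by rw [huIJ]; exact hXc)
      (by
        intro u hu
        rw [min_eq_left hδle, max_eq_right hδle] at hu
        exact ((hXd u (Ioo_subset_Icc_self hu)).hasDerivAt
          (Icc_mem_nhds hu.1 hu.2)).hasDerivWithinAt)
      (by rw [huIJ]; exact hhc.comp hXc hXmapsTo)
      (((hbc.pow 2).div (hhc.pow 3) (fun v hv => pow_ne_zero 3 (hneJ v hv))).mono himg)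
    have he : (∫ t in δ..(1-δ), (g t)^2)
        = ∫ t in δ..(1-δ), h (X t) • ((fun v => (b v)^2/(h v)^3) ∘ X) t := by
      apply integral_congr
      intro t ht
      rw [huIJ] at ht
      simp only [hgdef, Function.comp, smul_eq_mul]
      rw [hclid t ht]
      have := hneX t ht
      field_simp
    rw [he, hcv2]
    exact hcv
  -- identify the goal integral with ∫ f²
  have hgoal : (∫ t in δ..(1-δ), (∫ u in δ..t, b (X u) / h (X u)) ^ 2)
      = ∫ t in δ..(1-δ), (f t)^2 := by
    apply integral_congr
    intro t ht
    rw [huIJ] at ht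
    dsimp only
    have hinner : (∫ u in δ..t, b (X u) / h (X u)) = f t := by
      simp only [hfdef]
      apply integral_congr
      intro u hu
      rw [uIcc_of_le ht.1] at hu
      simp only [hgdef]
      rw [hclid u ⟨hu.1, le_trans hu.2 ht.2⟩]
    rw [hinner]
  rw [hgoal]
  -- choose n and conclude via arithmetic lemma
  set n : ℕ := ⌈c*M⌉₊ + 1 with hn
  have hnpos : 0 < n := Nat.succ_pos _
  have hn1 : c*M ≤ (n:ℝ) := by
    calc c*M ≤ (⌈c*M⌉₊ : ℝ) := Nat.le_ceil _
    _ ≤ n := by exact_mod_cast Nat.le_succ _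
  have hn2 : (n:ℝ) ≤ (c+2)*M := by
    have h1 : (⌈c*M⌉₊ : ℝ) < c*M + 1 := Nat.ceil_lt_add_one (by positivity)
    have h2 : (n:ℝ) = (⌈c*M⌉₊ : ℝ) + 1 := by exact_mod_cast rfl
    nlinarith
  have hglob := global δ (1-δ) hab f g w hfd hgc hgd hwc n hnpos
  have hLeq : (1 - δ) - δ = L := by rw [hL]; ring
  rw [hLeq] at hglob
  have hWnn : (0:ℝ) ≤ ∫ t in δ..(1-δ), (w t)^2 :=
    intervalIntegral.integral_nonneg hδle (fun t _ => sq_nonneg _)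
  exact arith L c₂ C₃ M (∫ t in δ..(1-δ), (f t)^2) (∫ t in δ..(1-δ), (w t)^2)
    hL0 hc₂ hC₃ hM n hcsq hc0 hn1 hn2 hw2 hWnn (le_trans hg2 hglob)
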